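/- For d ≥ 2, let f_{d,1}(x) = (Σ_{j=1}^d x_j − (d−1))₊ for x ∈ [0,1]^d, where y₊ = max(y,0). Then the mean dimension of f_{d,1} with respect to X ~ U[0,1]^d equals ν(f_{d,1}) = d · (1 − 3/(d+3)) / (1 − (d+2)/(2(d+1)!)), and consequently ν(f_{d,1}) = d − 3 + o(1) as d → ∞, i.e., lim_{d→∞} (ν(f_{d,1}) − (d−3)) = 0. -/

import Mathlib

open MeasureTheory ProbabilityTheory Real Filter

noncomputable section

/-- Uniform measure on the cube `[0,1]^d`. -/
def unifCube (d : ℕ) : Measure (Fin d → ℝ) :=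
  Measure.pi fun _ => (volume : Measure ℝ).restrict (Set.Icc 0 1)

/-- Sobol' total index `τ̄²_j(f) = (1/2)·E[(f(X) − f(X_{−j}:Z_j))²]`
for `X, Z` independent and uniform on `[0,1]^d`. -/
def sobolTauU (d : ℕ) (f : (Fin d → ℝ) → ℝ) (j : Fin d) : ℝ :=
  (1 / 2) * ∫ p : (Fin d → ℝ) × (Fin d → ℝ),
    (f p.1 - f (Function.update p.1 j (p.2 j))) ^ 2
      ∂((unifCube d).prod (unifCube d))

/-- Mean dimension `ν(f) = (Σ_j τ̄²_j(f)) / Var(f(X))`. -/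
def meanDimU (d : ℕ) (f : (Fin d → ℝ) → ℝ) : ℝ :=
  (∑ j, sobolTauU d f j) / variance f (unifCube d)

/-- The cusp function `f_{d,p}(x) = (Σ_j x_j − (d−1))₊^p`, with the
convention that `f_{d,0}` is the indicator `1{Σ_j x_j > d−1}`. -/
def fdp (d : ℕ) (p : ℝ) (x : Fin d → ℝ) : ℝ :=
  if p = 0 then (if (d : ℝ) - 1 < ∑ j, x j then 1 else 0)
  else (max ((∑ j, x j) - ((d : ℝ) - 1)) 0) ^ p

abbrev mu0 : Measure ℝ := (volume : Measure ℝ).restrict (Set.Icc 0 1)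

instance : IsProbabilityMeasure mu0 := ⟨by simp⟩

instance (d : ℕ) : IsProbabilityMeasure (unifCube d) := by
  unfold unifCube; infer_instance

lemma ae_cube (m : ℕ) : ∀ᵐ x ∂unifCube m, ∀ i, x i ∈ Set.Icc (0:ℝ) 1 := by
  have h := MeasureTheory.Measure.ae_pi_le_pi (μ := fun _ : Fin m => mu0)
  exact h (Filter.eventually_pi fun i => ae_restrict_mem measurableSet_Icc)

lemma ae_cube_sum (m : ℕ) :
    ∀ᵐ x ∂unifCube m, (∑ i, x i) ∈ Set.Icc (0:ℝ) m := by
  filter_upwards [ae_cube m] with x hx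
  constructor
  · exact Finset.sum_nonneg fun i _ => (hx i).1
  · calc ∑ i, x i ≤ ∑ _i : Fin m, (1:ℝ) := Finset.sum_le_sum fun i _ => (hx i).2
    _ = m := by simp

lemma inner_int (k : ℕ) {s : ℝ} (hs : s ≤ 1) :
    ∫ t in Set.Icc (0:ℝ) 1, (max (s + t - 1) 0) ^ (k+1)
      = (max s 0) ^ (k+2) / (k+2) := by
  rw [MeasureTheory.integral_Icc_eq_integral_Ioc,
    ← intervalIntegral.integral_of_le (by norm_num : (0:ℝ) ≤ 1)]
  rcases le_or_gt s 0 with h | h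
  · have : ∀ t ∈ Set.uIcc (0:ℝ) 1, (max (s + t - 1) 0) ^ (k+1) = 0 := by
      intro t ht
      rw [Set.uIcc_of_le (by norm_num : (0:ℝ) ≤ 1)] at ht
      have : s + t - 1 ≤ 0 := by nlinarith [ht.2]
      rw [max_eq_right this, zero_pow (Nat.succ_ne_zero k)]
    rw [intervalIntegral.integral_congr this]
    simp [max_eq_right h, zero_pow (by positivity : k+2 ≠ 0)]
  · have h1s : (0:ℝ) ≤ 1 - s := by linarith
    have h1s' : 1 - s ≤ 1 := by linarith
    have hcont : ∀ a b : ℝ, IntervalIntegrable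
        (fun t => (max (s + t - 1) 0) ^ (k+1)) volume a b := by
      intro a b
      exact (((continuous_const.add continuous_id).sub continuous_const).max
        continuous_const).pow _ |>.intervalIntegrable a b
    rw [← intervalIntegral.integral_add_adjacent_intervals (hcont 0 (1-s)) (hcont (1-s) 1)]
    have e1 : (∫ t in (0:ℝ)..(1-s), (max (s + t - 1) 0) ^ (k+1)) = 0 := by
      have : ∀ t ∈ Set.uIcc (0:ℝ) (1-s), (max (s + t - 1) 0) ^ (k+1) = 0 := by
        intro t ht
        rw [Set.uIcc_of_le h1s] at ht
        have : s + t - 1 ≤ 0 := by nlinarith [ht.2]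
        rw [max_eq_right this, zero_pow (Nat.succ_ne_zero k)]
      rw [intervalIntegral.integral_congr this]; simp
    have e2 : (∫ t in (1-s:ℝ)..1, (max (s + t - 1) 0) ^ (k+1)) = s ^ (k+2) / (k+2) := by
      have : ∀ t ∈ Set.uIcc (1-s:ℝ) 1, (max (s + t - 1) 0) ^ (k+1) = (t - (1-s)) ^ (k+1) := by
        intro t ht
        rw [Set.uIcc_of_le h1s'] at ht
        have h0 : 0 ≤ s + t - 1 := by nlinarith [ht.1]
        rw [max_eq_left h0]; ring_nf
      rw [intervalIntegral.integral_congr this]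
      have := intervalIntegral.integral_comp_sub_right (a := 1-s) (b := 1)
        (fun u => u ^ (k+1)) (1-s)
      rw [this]
      simp only [sub_self, show (1:ℝ) - (1-s) = s by ring, integral_pow]
      rw [zero_pow (by positivity : k+1+1 ≠ 0)]
      push_cast; ring_nf
    rw [e1, e2, max_eq_left h.le]; ring

def Fm (m k : ℕ) : ℝ :=
  ∫ x : Fin m → ℝ, (max ((∑ j, x j) - ((m:ℝ) - 1)) 0) ^ k ∂(unifCube m)

lemma Fm_zero (k : ℕ) : Fm 0 k = 1 := by
  simp [Fm]

lemma cont_g (m k : ℕ) (c : ℝ) :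
    Continuous (fun p : ℝ × (Fin m → ℝ) => (max (p.1 + ∑ j, p.2 j - c) 0) ^ k) :=
  (((continuous_fst.add (continuous_finset_sum _ fun i _ =>
    (continuous_apply i).comp continuous_snd)).sub continuous_const).max
      continuous_const).pow _

lemma Fm_succ (m k : ℕ) : Fm (m+1) (k+1) = Fm m (k+2) / ((k:ℝ)+2) := by
  classical
  have hmp := measurePreserving_piFinSuccAbove (fun _ : Fin (m+1) => mu0) 0
  set e := MeasurableEquiv.piFinSuccAbove (fun _ : Fin (m+1) => ℝ) 0 with he
  set g : ℝ × (Fin m → ℝ) → ℝ :=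
    fun p => (max (p.1 + ∑ j, p.2 j - (m:ℝ)) 0) ^ (k+1) with hg
  have hgc : Continuous g := cont_g m (k+1) (m:ℝ)
  have hstep : Fm (m+1) (k+1) = ∫ p, g p ∂(mu0.prod (unifCube m)) := by
    have h2 := hmp.integral_comp e.measurableEmbedding g
    refine Eq.trans ?_ h2
    refine integral_congr_ae (Filter.Eventually.of_forall fun x => ?_)
    have hsum : (∑ j, x j) = x 0 + ∑ j : Fin m, x (Fin.succAbove 0 j) :=
      Fin.sum_univ_succAbove x 0
    simp only [hg, he, MeasurableEquiv.piFinSuccAbove_apply, Fin.insertNthEquiv,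
      Equiv.coe_fn_symm_mk, Fin.removeNth]
    rw [hsum]
    push_cast
    ring_nf
  have hbd : ∀ᵐ p ∂(mu0.prod (unifCube m)), ‖g p‖ ≤ 1 := by
    have hp : MeasurableSet {p : ℝ × (Fin m → ℝ) | ‖g p‖ ≤ 1} :=
      (hgc.norm.measurable) measurableSet_Iic
    rw [MeasureTheory.Measure.ae_prod_iff_ae_ae hp]
    filter_upwards [ae_restrict_mem measurableSet_Icc] with t ht
    filter_upwards [ae_cube_sum m] with y hy
    simp only [hg, Real.norm_eq_abs]
    rw [abs_of_nonneg (by positivity)]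
    refine pow_le_one₀ (le_max_right _ _) (max_le ?_ (by norm_num))
    have := ht.1; have := ht.2; have := hy.1; have := hy.2
    linarith
  have hint : Integrable g (mu0.prod (unifCube m)) :=
    ⟨hgc.aestronglyMeasurable, HasFiniteIntegral.of_bounded hbd⟩
  rw [hstep, integral_prod_symm g hint]
  have hcongr : ∀ᵐ y ∂(unifCube m),
      (∫ t, g (t, y) ∂mu0)
        = (max ((∑ j, y j) - ((m:ℝ)-1)) 0) ^ (k+2) / ((k:ℝ)+2) := by
    filter_upwards [ae_cube_sum m] with y hy
    have hs : (∑ j, y j) - ((m:ℝ)-1) ≤ 1 := by have := hy.2; linarith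
    calc ∫ t, g (t, y) ∂mu0
        = ∫ t in Set.Icc (0:ℝ) 1,
            (max (((∑ j, y j) - ((m:ℝ)-1)) + t - 1) 0) ^ (k+1) :=
          integral_congr_ae (Filter.Eventually.of_forall fun t => by
            simp only [hg]; congr 2; ring)
      _ = (max ((∑ j, y j) - ((m:ℝ)-1)) 0) ^ (k+2) / ((k:ℝ)+2) := inner_int k hs
  rw [integral_congr_ae hcongr, integral_div, Fm]

lemma Fm_val (m k : ℕ) : Fm m (k+1) = ((k+1).factorial : ℝ) / ((m+k+1).factorial : ℝ) := by
  induction m generalizing k with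
  | zero =>
    rw [Fm_zero, show 0+k+1 = k+1 from by omega,
      div_self (Nat.cast_ne_zero.2 (Nat.factorial_ne_zero _) : ((k+1).factorial:ℝ) ≠ 0)]
    
  | succ m ih =>
    have h1 : m + (k+1) + 1 = m + k + 2 := by omega
    have h2 : m + 1 + k + 1 = m + k + 2 := by omega
    rw [Fm_succ, ih (k+1), h1, h2, Nat.factorial_succ (k+1)]
    have hz : ((m+k+2).factorial : ℝ) ≠ 0 := Nat.cast_ne_zero.2 (Nat.factorial_ne_zero _)
    have hz2 : ((k:ℝ)+2) ≠ 0 := by positivity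
    field_simp
    push_cast; ring

lemma integrable_bound {α : Type*} [MeasurableSpace α] {μ : Measure α} [IsFiniteMeasure μ]
    {f : α → ℝ} (hm : AEStronglyMeasurable f μ) {C : ℝ} (h : ∀ᵐ x ∂μ, ‖f x‖ ≤ C) :
    Integrable f μ :=
  ⟨hm, HasFiniteIntegral.of_bounded h⟩

lemma max_comm_arg (S z m' : ℝ) : max (S - (m'-1) + z - 1) 0 = max (z + S - m') 0 := by
  congr 1; ring

lemma z_integral (m : ℕ) {S : ℝ} (hS : S ≤ (m:ℝ)) (a : ℝ) :
    ∫ z, (a - max (z + S - (m:ℝ)) 0)^2 ∂mu0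
      = a^2 - a * (max (S - ((m:ℝ)-1)) 0)^2 + (max (S - ((m:ℝ)-1)) 0)^3 / 3 := by
  have hs : S - ((m:ℝ)-1) ≤ 1 := by linarith
  have i1 := inner_int 0 hs
  have i2 := inner_int 1 hs
  have hrw : ∀ z : ℝ, (a - max (z + S - (m:ℝ)) 0)^2
      = a^2 - 2*a*(max (S - ((m:ℝ)-1) + z - 1) 0)^(0+1)
        + (max (S - ((m:ℝ)-1) + z - 1) 0)^(1+1) := by
    intro z; rw [max_comm_arg]; ring
  rw [integral_congr_ae (Filter.Eventually.of_forall hrw)]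
  have c1 : Continuous (fun z : ℝ => 2*a*(max (S - ((m:ℝ)-1) + z - 1) 0)^(0+1)) := by
    exact continuous_const.mul ((((continuous_const.add continuous_id).sub
      continuous_const).max continuous_const).pow _)
  have c2 : Continuous (fun z : ℝ => (max (S - ((m:ℝ)-1) + z - 1) 0)^(1+1)) := by
    exact (((continuous_const.add continuous_id).sub
      continuous_const).max continuous_const).pow _
  have h1 : Integrable (fun z : ℝ => 2*a*(max (S - ((m:ℝ)-1) + z - 1) 0)^(0+1)) mu0 :=
    c1.integrableOn_Icc
  have h2 : Integrable (fun z : ℝ => (max (S - ((m:ℝ)-1) + z - 1) 0)^(1+1)) mu0 :=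
    c2.integrableOn_Icc
  have hconst : Integrable (fun _ : ℝ => a^2) mu0 := integrable_const _
  have h3 : Integrable (fun z : ℝ =>
      a^2 - 2*a*(max (S - ((m:ℝ)-1) + z - 1) 0)^(0+1)) mu0 := hconst.sub h1
  rw [integral_add h3 h2, integral_sub hconst h1, integral_const]
  simp only [measure_univ, ENNReal.toReal_one, probReal_univ, one_smul]
  rw [show (fun z : ℝ => 2*a*(max (S - ((m:ℝ)-1) + z - 1) 0)^(0+1))
      = (fun z : ℝ => 2*a*((fun z => (max (S - ((m:ℝ)-1) + z - 1) 0)^(0+1)) z)) from rfl,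
    integral_const_mul _, i1, i2]
  push_cast; ring

lemma t_integral (m : ℕ) {S : ℝ} (hS : S ≤ (m:ℝ)) :
    ∫ t, ((max (t + S - (m:ℝ)) 0)^2
        - (max (t + S - (m:ℝ)) 0) * (max (S - ((m:ℝ)-1)) 0)^2
        + (max (S - ((m:ℝ)-1)) 0)^3/3) ∂mu0
      = 2*(max (S - ((m:ℝ)-1)) 0)^3/3 - (max (S - ((m:ℝ)-1)) 0)^4/2 := by
  have hs : S - ((m:ℝ)-1) ≤ 1 := by linarith
  have i1 := inner_int 0 hs
  have i2 := inner_int 1 hs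
  set u := max (S - ((m:ℝ)-1)) 0 with hu
  have hrw : ∀ t : ℝ, (max (t + S - (m:ℝ)) 0)^2
        - (max (t + S - (m:ℝ)) 0) * u^2 + u^3/3
      = (max (S - ((m:ℝ)-1) + t - 1) 0)^(1+1)
        - u^2*(max (S - ((m:ℝ)-1) + t - 1) 0)^(0+1) + u^3/3 := by
    intro t; rw [max_comm_arg]; ring
  rw [integral_congr_ae (Filter.Eventually.of_forall hrw)]
  have c1 : Continuous (fun t : ℝ => u^2*(max (S - ((m:ℝ)-1) + t - 1) 0)^(0+1)) := by
    exact continuous_const.mul ((((continuous_const.add continuous_id).sub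
      continuous_const).max continuous_const).pow _)
  have c2 : Continuous (fun t : ℝ => (max (S - ((m:ℝ)-1) + t - 1) 0)^(1+1)) := by
    exact (((continuous_const.add continuous_id).sub
      continuous_const).max continuous_const).pow _
  have h1 : Integrable (fun t : ℝ => u^2*(max (S - ((m:ℝ)-1) + t - 1) 0)^(0+1)) mu0 :=
    c1.integrableOn_Icc
  have h2 : Integrable (fun t : ℝ => (max (S - ((m:ℝ)-1) + t - 1) 0)^(1+1)) mu0 :=
    c2.integrableOn_Icc
  have hconst : Integrable (fun _ : ℝ => u^3/3) mu0 := integrable_const _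
  have h4 : Integrable (fun t : ℝ =>
      (max (S - ((m:ℝ)-1) + t - 1) 0)^(1+1)
        - u^2*(max (S - ((m:ℝ)-1) + t - 1) 0)^(0+1)) mu0 := h2.sub h1
  rw [integral_add h4 hconst, integral_sub h2 h1, integral_const]
  simp only [measure_univ, ENNReal.toReal_one, probReal_univ, one_smul]
  rw [show (fun t : ℝ => u^2*(max (S - ((m:ℝ)-1) + t - 1) 0)^(0+1))
      = (fun t : ℝ => u^2*((fun t => (max (S - ((m:ℝ)-1) + t - 1) 0)^(0+1)) t)) from rfl,
    integral_const_mul _, i1, i2]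
  push_cast; ring

lemma fdp_one_eq (d : ℕ) :
    fdp d 1 = fun x => max ((∑ i, x i) - ((d:ℝ)-1)) 0 := by
  funext x
  simp [fdp, Real.rpow_one]

lemma cont_fdp (d : ℕ) : Continuous (fdp d 1) := by
  rw [fdp_one_eq]
  exact ((continuous_finset_sum _ fun i _ => continuous_apply i).sub
    continuous_const).max continuous_const

lemma ae_prod_mem {α β : Type*} [MeasurableSpace α] [MeasurableSpace β]
    {μ : Measure α} {ν : Measure β} [SFinite μ] [SFinite ν] {s : Set α} {t : Set β}
    (hs : MeasurableSet s) (ht : MeasurableSet t)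
    (hμ : ∀ᵐ x ∂μ, x ∈ s) (hν : ∀ᵐ y ∂ν, y ∈ t) :
    ∀ᵐ p ∂μ.prod ν, p.1 ∈ s ∧ p.2 ∈ t := by
  refine (MeasureTheory.Measure.ae_prod_iff_ae_ae
    (p := fun z => z.1 ∈ s ∧ z.2 ∈ t)
    ((hs.preimage measurable_fst).inter (ht.preimage measurable_snd))).2 ?_
  filter_upwards [hμ] with x hx
  filter_upwards [hν] with y hy
  exact ⟨hx, hy⟩

lemma int_u (m k : ℕ) :
    Integrable (fun y : Fin m → ℝ => (max ((∑ i, y i) - ((m:ℝ)-1)) 0)^k)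
      (unifCube m) := by
  refine integrable_bound
    (((((continuous_finset_sum _ fun i _ => continuous_apply i).sub
      continuous_const).max continuous_const).pow k).aestronglyMeasurable) (C := 1) ?_
  filter_upwards [ae_cube_sum m] with y hy
  rw [Real.norm_eq_abs, abs_of_nonneg (by positivity)]
  refine pow_le_one₀ (le_max_right _ _) (max_le ?_ (by norm_num))
  have := hy.2; linarith

lemma tau_val (m : ℕ) (j : Fin (m+1)) :
    sobolTauU (m+1) (fdp (m+1) 1) j = Fm m 3 / 3 - Fm m 4 / 4 := by
  classical
  set ν := unifCube (m+1) with hν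
  set f := fdp (m+1) 1 with hf
  have hfc : Continuous f := cont_fdp (m+1)
  set G : (Fin (m+1) → ℝ) × ℝ → ℝ :=
    fun q => (f q.1 - f (Function.update q.1 j q.2))^2 with hG
  have hGc : Continuous G := by
    exact ((hfc.comp continuous_fst).sub
      (hfc.comp (continuous_fst.update j continuous_snd))).pow 2
  -- Step 1: push forward along p ↦ (p.1, p.2 j)
  have hmpev : MeasurePreserving (fun x : Fin (m+1) → ℝ => x j) ν mu0 := by
    have h1 := measurePreserving_piFinSuccAbove (fun _ : Fin (m+1) => mu0) j
    have h2 : MeasurePreserving (Prod.fst : ℝ × (Fin m → ℝ) → ℝ)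
        (mu0.prod (unifCube m)) mu0 := ⟨measurable_fst, by simp⟩
    exact h2.comp h1
  have hmpT : MeasurePreserving
      (fun p : (Fin (m+1) → ℝ) × (Fin (m+1) → ℝ) => (p.1, p.2 j))
      (ν.prod ν) (ν.prod mu0) := (MeasurePreserving.id ν).prod hmpev
  have e1 : ∫ q, G q ∂(ν.prod mu0)
      = ∫ p : (Fin (m+1) → ℝ) × (Fin (m+1) → ℝ),
          (f p.1 - f (Function.update p.1 j (p.2 j)))^2 ∂(ν.prod ν) := by
    rw [← hmpT.map_eq,
      integral_map hmpT.measurable.aemeasurable hGc.aestronglyMeasurable]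
  -- Step 2: split the first coordinate at j
  set E := MeasurableEquiv.piFinSuccAbove (fun _ : Fin (m+1) => ℝ) j with hE
  have hmpE : MeasurePreserving (Prod.map ⇑E (id : ℝ → ℝ)) (ν.prod mu0)
      ((mu0.prod (unifCube m)).prod mu0) :=
    (measurePreserving_piFinSuccAbove (fun _ : Fin (m+1) => mu0) j).prod
      (MeasurePreserving.id mu0)
  have hembE : MeasurableEmbedding (Prod.map ⇑E (id : ℝ → ℝ)) :=
    E.measurableEmbedding.prodMap (MeasurableEmbedding.id)
  set G' : (ℝ × (Fin m → ℝ)) × ℝ → ℝ :=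
    fun r => (max (r.1.1 + (∑ i, r.1.2 i) - (m:ℝ)) 0
      - max (r.2 + (∑ i, r.1.2 i) - (m:ℝ)) 0)^2 with hG'
  have hG'c : Continuous G' := by
    have hsum : Continuous (fun r : (ℝ × (Fin m → ℝ)) × ℝ => ∑ i, r.1.2 i) :=
      continuous_finset_sum _ fun i _ => (continuous_apply i).comp
        (continuous_snd.comp continuous_fst)
    exact ((((continuous_fst.comp continuous_fst).add hsum).sub
      continuous_const).max continuous_const).sub
      (((continuous_snd.add hsum).sub continuous_const).max continuous_const) |>.pow 2
  have e2 : ∫ q, G q ∂(ν.prod mu0)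
      = ∫ r, G' r ∂((mu0.prod (unifCube m)).prod mu0) := by
    rw [← hmpE.integral_comp hembE G']
    refine integral_congr_ae (Filter.Eventually.of_forall fun q => ?_)
    obtain ⟨x, z⟩ := q
    have hc : ((m+1:ℕ):ℝ) - 1 = (m:ℝ) := by push_cast; ring
    have hsum1 : (∑ i, x i) = x j + ∑ i : Fin m, x (j.succAbove i) :=
      Fin.sum_univ_succAbove x j
    have hsum2 : (∑ i, Function.update x j z i)
        = z + ∑ i : Fin m, x (j.succAbove i) := by
      rw [Fin.sum_univ_succAbove (Function.update x j z) j, Function.update_self]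
      congr 1
      exact Finset.sum_congr rfl fun i _ => by
        rw [Function.update_of_ne (Fin.succAbove_ne j i)]
    simp only [hG, hG', hf, fdp_one_eq, hE, Prod.map,
      MeasurableEquiv.piFinSuccAbove_apply, Fin.insertNthEquiv,
      Equiv.coe_fn_symm_mk, Fin.removeNth, id]
    rw [hc, hsum1, hsum2]
  -- ae membership facts
  have aeT : ∀ᵐ t ∂mu0, t ∈ Set.Icc (0:ℝ) 1 := ae_restrict_mem measurableSet_Icc
  have htset : MeasurableSet {y : Fin m → ℝ | (∑ i, y i) ∈ Set.Icc (0:ℝ) m} :=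
    (Finset.measurable_sum Finset.univ fun i _ => measurable_pi_apply i)
      measurableSet_Icc
  have aeP : ∀ᵐ q ∂(mu0.prod (unifCube m)),
      q.1 ∈ Set.Icc (0:ℝ) 1 ∧ q.2 ∈ {y : Fin m → ℝ | (∑ i, y i) ∈ Set.Icc (0:ℝ) m} :=
    ae_prod_mem measurableSet_Icc htset aeT (ae_cube_sum m)
  have hPset : MeasurableSet {q : ℝ × (Fin m → ℝ) |
      q.1 ∈ Set.Icc (0:ℝ) 1 ∧ q.2 ∈ {y : Fin m → ℝ | (∑ i, y i) ∈ Set.Icc (0:ℝ) m}} :=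
    (measurableSet_Icc.preimage measurable_fst).inter (htset.preimage measurable_snd)
  have aeΩ : ∀ᵐ r ∂((mu0.prod (unifCube m)).prod mu0),
      (r.1.1 ∈ Set.Icc (0:ℝ) 1 ∧
        r.1.2 ∈ {y : Fin m → ℝ | (∑ i, y i) ∈ Set.Icc (0:ℝ) m}) ∧
      r.2 ∈ Set.Icc (0:ℝ) 1 :=
    ae_prod_mem hPset measurableSet_Icc aeP aeT
  -- integrability of G'
  have hintΩ : Integrable G' ((mu0.prod (unifCube m)).prod mu0) := by
    refine integrable_bound hG'c.aestronglyMeasurable (C := 1) ?_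
    filter_upwards [aeΩ] with r hr
    obtain ⟨⟨⟨ht0, ht1⟩, hS⟩, ⟨hz0, hz1⟩⟩ := hr
    obtain ⟨hS0, hSm⟩ := hS
    set a := max (r.1.1 + (∑ i, r.1.2 i) - (m:ℝ)) 0 with ha
    set b := max (r.2 + (∑ i, r.1.2 i) - (m:ℝ)) 0 with hb
    have ha0 : 0 ≤ a := le_max_right _ _
    have hb0 : 0 ≤ b := le_max_right _ _
    have ha1 : a ≤ 1 := max_le (by linarith) (by norm_num)
    have hb1 : b ≤ 1 := max_le (by linarith) (by norm_num)
    simp only [hG', Real.norm_eq_abs]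
    rw [abs_of_nonneg (sq_nonneg _)]
    nlinarith [mul_nonneg (sub_nonneg.2 ha1) (sub_nonneg.2 hb1), mul_nonneg ha0 hb0]
  -- Fubini: inner integral over z
  set φ : ℝ × (Fin m → ℝ) → ℝ := fun q =>
    (max (q.1 + (∑ i, q.2 i) - (m:ℝ)) 0)^2
      - (max (q.1 + (∑ i, q.2 i) - (m:ℝ)) 0)
          * (max ((∑ i, q.2 i) - ((m:ℝ)-1)) 0)^2
      + (max ((∑ i, q.2 i) - ((m:ℝ)-1)) 0)^3/3 with hφ
  have e3 : ∫ r, G' r ∂((mu0.prod (unifCube m)).prod mu0)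
      = ∫ q, φ q ∂(mu0.prod (unifCube m)) := by
    rw [integral_prod _ hintΩ]
    refine integral_congr_ae ?_
    filter_upwards [aeP] with q hq
    have hSm : (∑ i, q.2 i) ≤ (m:ℝ) := hq.2.2
    simpa [hG', hφ] using z_integral m hSm (max (q.1 + (∑ i, q.2 i) - (m:ℝ)) 0)
  -- integrability of φ
  have hφc : Continuous φ := by
    have hsum : Continuous (fun q : ℝ × (Fin m → ℝ) => ∑ i, q.2 i) :=
      continuous_finset_sum _ fun i _ => (continuous_apply i).comp continuous_snd
    have h1 : Continuous (fun q : ℝ × (Fin m → ℝ) =>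
        max (q.1 + (∑ i, q.2 i) - (m:ℝ)) 0) :=
      ((continuous_fst.add hsum).sub continuous_const).max continuous_const
    have h2 : Continuous (fun q : ℝ × (Fin m → ℝ) =>
        max ((∑ i, q.2 i) - ((m:ℝ)-1)) 0) :=
      (hsum.sub continuous_const).max continuous_const
    exact ((h1.pow 2).sub (h1.mul (h2.pow 2))).add ((h2.pow 3).div_const 3)
  have hintφ : Integrable φ (mu0.prod (unifCube m)) := by
    refine integrable_bound hφc.aestronglyMeasurable (C := 3) ?_
    filter_upwards [aeP] with q hq
    obtain ⟨⟨ht0, ht1⟩, hS0, hSm⟩ := hq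
    set a := max (q.1 + (∑ i, q.2 i) - (m:ℝ)) 0 with ha
    set u := max ((∑ i, q.2 i) - ((m:ℝ)-1)) 0 with hu
    have ha0 : 0 ≤ a := le_max_right _ _
    have hu0 : 0 ≤ u := le_max_right _ _
    have ha1 : a ≤ 1 := max_le (by linarith) (by norm_num)
    have hu1 : u ≤ 1 := max_le (by linarith) (by norm_num)
    simp only [hφ, Real.norm_eq_abs]
    rw [abs_le]
    constructor <;> nlinarith
  -- inner integral over t
  have e4 : ∫ q, φ q ∂(mu0.prod (unifCube m))
      = ∫ y, (2*(max ((∑ i, y i) - ((m:ℝ)-1)) 0)^3/3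
          - (max ((∑ i, y i) - ((m:ℝ)-1)) 0)^4/2) ∂(unifCube m) := by
    rw [integral_prod_symm _ hintφ]
    refine integral_congr_ae ?_
    filter_upwards [ae_cube_sum m] with y hy
    have hSm : (∑ i, y i) ≤ (m:ℝ) := hy.2
    simpa [hφ] using t_integral m hSm
  -- final linearity
  have e5 : ∫ y, (2*(max ((∑ i, y i) - ((m:ℝ)-1)) 0)^3/3
          - (max ((∑ i, y i) - ((m:ℝ)-1)) 0)^4/2) ∂(unifCube m)
      = 2/3 * Fm m 3 - 1/2 * Fm m 4 := by
    have h3 := int_u m 3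
    have h4 := int_u m 4
    have hr : ∀ y : Fin m → ℝ,
        2*(max ((∑ i, y i) - ((m:ℝ)-1)) 0)^3/3
          - (max ((∑ i, y i) - ((m:ℝ)-1)) 0)^4/2
        = (2/3) * (max ((∑ i, y i) - ((m:ℝ)-1)) 0)^3
          - (1/2) * (max ((∑ i, y i) - ((m:ℝ)-1)) 0)^4 := fun y => by ring
    rw [integral_congr_ae (Filter.Eventually.of_forall hr),
      integral_sub ((h3.const_mul _)) ((h4.const_mul _)),
      integral_const_mul _, integral_const_mul _, Fm, Fm]
  -- put everything together
  have : sobolTauU (m+1) f j = (1/2) * ∫ q, G q ∂(ν.prod mu0) := by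
    rw [e1]; rfl
  rw [this, e2, e3, e4, e5]
  ring

lemma var_val (d : ℕ) :
    variance (fdp d 1) (unifCube d) = Fm d 2 - (Fm d 1)^2 := by
  have hbd : ∀ᵐ x ∂unifCube d, ‖fdp d 1 x‖ ≤ 1 := by
    filter_upwards [ae_cube_sum d] with x hx
    rw [fdp_one_eq, Real.norm_eq_abs, abs_of_nonneg (le_max_right _ _)]
    refine max_le ?_ (by norm_num)
    have := hx.2; linarith
  have hmem : MemLp (fdp d 1) 2 (unifCube d) :=
    (memLp_top_of_bound (cont_fdp d).aestronglyMeasurable 1 hbd).mono_exponent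
      le_top
  rw [variance_eq_sub hmem]
  congr 1
  · refine integral_congr_ae (Filter.Eventually.of_forall fun x => ?_)
    simp [fdp_one_eq]
  · congr 1
    refine integral_congr_ae (Filter.Eventually.of_forall fun x => ?_)
    simp [fdp_one_eq]

lemma meanDim_formula (m : ℕ) :
    meanDimU (m+1) (fdp (m+1) 1)
      = ((m:ℝ)+1) * (1 - 3/((m:ℝ)+4))
          / (1 - ((m:ℝ)+3)/(2*(((m+2).factorial : ℕ) : ℝ))) := by
  have hsum : ∑ j : Fin (m+1), sobolTauU (m+1) (fdp (m+1) 1) j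
      = ((m:ℝ)+1) * (Fm m 3/3 - Fm m 4/4) := by
    rw [Finset.sum_congr rfl (fun j _ => tau_val m j), Finset.sum_const,
      Finset.card_univ, Fintype.card_fin, nsmul_eq_mul]
    push_cast; ring
  have v1 : Fm (m+1) 1 = 1/(((m+2).factorial : ℕ) : ℝ) := by
    have := Fm_val (m+1) 0
    rw [show m+1+0+1 = m+2 from by omega] at this
    simpa using this
  have v2 : Fm (m+1) 2 = 2/(((m+3).factorial : ℕ) : ℝ) := by
    have := Fm_val (m+1) 1
    rw [show m+1+1+1 = m+3 from by omega] at this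
    norm_num at this ⊢
    exact this
  have v3 : Fm m 3 = 6/(((m+3).factorial : ℕ) : ℝ) := by
    have := Fm_val m 2
    rw [show m+2+1 = m+3 from by omega] at this
    norm_num [Nat.factorial] at this ⊢
    exact this
  have v4 : Fm m 4 = 24/(((m+4).factorial : ℕ) : ℝ) := by
    have := Fm_val m 3
    rw [show m+3+1 = m+4 from by omega] at this
    norm_num [Nat.factorial] at this ⊢
    exact this
  set P : ℝ := (((m+2).factorial : ℕ) : ℝ) with hPdef
  have hP : 0 < P := by positivity
  have hf3 : (((m+3).factorial : ℕ) : ℝ) = ((m:ℝ)+3) * P := by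
    rw [show m+3 = (m+2)+1 from by omega, Nat.factorial_succ]
    push_cast; ring
  have hf4 : (((m+4).factorial : ℕ) : ℝ) = ((m:ℝ)+4) * (((m:ℝ)+3) * P) := by
    rw [show m+4 = (m+3)+1 from by omega, Nat.factorial_succ, Nat.cast_mul, hf3]
    push_cast; ring
  have hkey : ((m:ℝ)+3) < 2*P := by
    have h1 : m+2 ≤ (m+2).factorial := Nat.self_le_factorial _
    have h2 : ((m:ℝ)+2) ≤ P := by rw [hPdef]; exact_mod_cast h1
    linarith
  have hm3 : ((m:ℝ)+3) ≠ 0 := by positivity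
  have hm4 : ((m:ℝ)+4) ≠ 0 := by positivity
  have hPne : P ≠ 0 := ne_of_gt hP
  rw [meanDimU, hsum, var_val, v2, v3, v4, v1, hf3, hf4]
  have hD1 : (0:ℝ) < 2/(((m:ℝ)+3)*P) - (1/P)^2 := by
    rw [sub_pos, div_pow, one_pow, div_lt_div_iff₀ (by positivity) (by positivity)]
    nlinarith
  have hD2 : (0:ℝ) < 1 - ((m:ℝ)+3)/(2*P) := by
    rw [sub_pos, div_lt_one (by positivity)]
    linarith
  rw [div_eq_div_iff (by ring_nf; ring_nf at hD1; linarith) (by ring_nf; ring_nf at hD2; linarith)]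
  field_simp
  ring

lemma nat_sq_le_two_pow : ∀ n : ℕ, 4 ≤ n → n^2 ≤ 2^n := by
  intro n hn
  induction n with
  | zero => omega
  | succ k ih =>
    rcases Nat.lt_or_ge k 4 with h | h
    · interval_cases k <;> simp_all
    · have hk := ih (by omega)
      have h2 : 2*k+1 ≤ k^2 := by nlinarith
      have : (k+1)^2 = k^2 + (2*k+1) := by ring
      calc (k+1)^2 = k^2 + (2*k+1) := by ring
        _ ≤ 2^k + 2^k := by omega
        _ = 2^(k+1) := by ring

lemma tendsto_sq_div_factorial :
    Tendsto (fun n : ℕ => ((n:ℝ))^2 / (n.factorial : ℝ)) atTop (nhds 0) := by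
  have h2 := FloorSemiring.tendsto_pow_div_factorial_atTop (2:ℝ)
  refine squeeze_zero' ?_ ?_ h2
  · filter_upwards with n; positivity
  · filter_upwards [eventually_atTop.2 ⟨4, fun n hn => nat_sq_le_two_pow n hn⟩] with n hn
    have hcast : ((n:ℝ))^2 ≤ (2:ℝ)^n := by exact_mod_cast hn
    gcongr

lemma tendsto_q :
    Tendsto (fun d : ℕ => (((d:ℝ)+1))^2 / ((d+1).factorial : ℝ)) atTop (nhds 0) := by
  have := tendsto_sq_div_factorial.comp (tendsto_add_atTop_nat 1)
  refine this.congr fun d => ?_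
  simp [Function.comp]

def epsd (d : ℕ) : ℝ := ((d:ℝ)+2)/(2*((d+1).factorial : ℝ))

lemma tendsto_eps : Tendsto epsd atTop (nhds 0) := by
  refine squeeze_zero' ?_ ?_ tendsto_q
  · filter_upwards with d; unfold epsd; positivity
  · filter_upwards [eventually_atTop.2 ⟨1, fun d (hd : 1 ≤ d) => hd⟩] with d hd
    unfold epsd
    rw [div_le_div_iff₀ (by positivity) (by positivity)]
    have h1 : (0:ℝ) < ((d+1).factorial : ℝ) := by positivity
    have : (1:ℝ) ≤ (d:ℝ) := by exact_mod_cast hd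
    have h2 : (d:ℝ)+2 ≤ 2*((d:ℝ)+1)^2 := by nlinarith
    nlinarith [mul_le_mul_of_nonneg_right h2 h1.le]

lemma tendsto_deps :
    Tendsto (fun d : ℕ => ((d:ℝ)-3) * epsd d) atTop (nhds 0) := by
  refine squeeze_zero' ?_ ?_ tendsto_q
  · filter_upwards [eventually_atTop.2 ⟨3, fun d (hd : 3 ≤ d) => hd⟩] with d hd
    have : (3:ℝ) ≤ (d:ℝ) := by exact_mod_cast hd
    unfold epsd
    have h1 : (0:ℝ) < ((d+1).factorial : ℝ) := by positivity
    have : (0:ℝ) ≤ (d:ℝ)-3 := by linarith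
    positivity
  · filter_upwards [eventually_atTop.2 ⟨3, fun d (hd : 3 ≤ d) => hd⟩] with d hd
    have h3 : (3:ℝ) ≤ (d:ℝ) := by exact_mod_cast hd
    unfold epsd
    have h1 : (0:ℝ) < ((d+1).factorial : ℝ) := by positivity
    rw [mul_div_assoc', div_le_div_iff₀ (by positivity) (by positivity)]
    have h2 : ((d:ℝ)-3)*((d:ℝ)+2) ≤ 2*((d:ℝ)+1)^2 := by nlinarith
    nlinarith [mul_le_mul_of_nonneg_right h2 h1.le]

lemma part1 : ∀ d : ℕ, 2 ≤ d →
    meanDimU d (fdp d 1)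
      = d * (1 - 3 / ((d : ℝ) + 3))
          / (1 - ((d : ℝ) + 2) / (2 * ((d + 1).factorial : ℝ))) := by
  intro d hd
  obtain ⟨m, rfl⟩ : ∃ m, d = m+1 := ⟨d-1, by omega⟩
  rw [meanDim_formula m, show m+1+1 = m+2 from rfl]
  push_cast
  ring_nf


/-- Mean dimension of the kink cusp `f_{d,1}`:
`ν(f_{d,1}) = d(1 − 3/(d+3))/(1 − (d+2)/(2(d+1)!))`, and
`ν(f_{d,1}) = d − 3 + o(1)`. -/
theorem stmt13 :
    (∀ d : ℕ, 2 ≤ d →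
      meanDimU d (fdp d 1)
        = d * (1 - 3 / ((d : ℝ) + 3))
            / (1 - ((d : ℝ) + 2) / (2 * ((d + 1).factorial : ℝ))))
    ∧ Tendsto (fun d : ℕ => meanDimU d (fdp d 1) - ((d : ℝ) - 3))
        atTop (nhds 0) := by
  refine ⟨part1, ?_⟩
  have heq : ∀ᶠ d : ℕ in atTop,
      (9/((d:ℝ)+3) + ((d:ℝ)-3) * epsd d) / (1 - epsd d)
        = meanDimU d (fdp d 1) - ((d:ℝ)-3) := by
    filter_upwards [eventually_atTop.2 ⟨2, fun d (h : 2 ≤ d) => h⟩] with d hd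
    rw [part1 d hd]
    set F : ℝ := ((d+1).factorial : ℝ) with hF
    have hfac : (0:ℝ) < F := by rw [hF]; positivity
    have key : ((d:ℝ)+2) < 2*F := by
      have h1 : d+1 ≤ (d+1).factorial := Nat.self_le_factorial _
      have h2 : ((d:ℝ)+1) ≤ F := by rw [hF]; exact_mod_cast h1
      have hd0 : (2:ℝ) ≤ (d:ℝ) := by exact_mod_cast hd
      linarith
    have hd3 : ((d:ℝ)+3) ≠ 0 := by positivity
    have hD : 1 - ((d:ℝ)+2)/(2*F) ≠ 0 := by
      have : ((d:ℝ)+2)/(2*F) < 1 := by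
        rw [div_lt_one (by positivity)]; linarith
      intro h; rw [sub_eq_zero] at h; rw [← h] at this; exact lt_irrefl _ this
    show (9/((d:ℝ)+3) + ((d:ℝ)-3) * (((d:ℝ)+2)/(2*F))) / (1 - ((d:ℝ)+2)/(2*F)) = _
    set e : ℝ := ((d:ℝ)+2)/(2*F) with he
    field_simp
    ring
  refine Tendsto.congr' heq ?_
  have h9 : Tendsto (fun d : ℕ => 9/((d:ℝ)+3)) atTop (nhds 0) :=
    Tendsto.div_atTop tendsto_const_nhds
      (tendsto_atTop_add_const_right _ 3 tendsto_natCast_atTop_atTop)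
  have hnum := h9.add tendsto_deps
  have hden : Tendsto (fun d : ℕ => 1 - epsd d) atTop (nhds (1 - 0)) :=
    tendsto_const_nhds.sub tendsto_eps
  have := hnum.div hden (by norm_num)
  simp only [add_zero, sub_zero, div_one, zero_div] at this; exact this


end
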